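/- Suppose F and G have finite and equal second moments, i.e. ∫ x² dF(x) = ∫ x² dν(x) < ∞, and that for some constants A, B > 0 one has |G(x)| ≤ A e^{−x²/B} for all x ≤ 0 and |1 − G(x)| ≤ A e^{−x²/B} for all x ≥ 0. If Δ > 0, then sup_x [x² |F(x) − G(x)|] ≤ 13 A B Δ log(e + 1/Δ). -/

import Mathlib

open MeasureTheory Set Filter

lemma aux_gauss {B : ℝ} (hB : 0 < B) (T : ℝ) :
    IntegrableOn (fun t => 2 * t * Real.exp (-t ^ 2 / B)) (Set.Ioi T) volume ∧
      ∫ t in Set.Ioi T, 2 * t * Real.exp (-t ^ 2 / B) = B * Real.exp (-T ^ 2 / B) := by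
  have hint : Integrable (fun t : ℝ => 2 * t * Real.exp (-t ^ 2 / B)) := by
    have h := (integrable_mul_exp_neg_mul_sq (b := 1/B) (by positivity)).const_mul 2
    have : (fun t : ℝ => 2 * t * Real.exp (-t ^ 2 / B))
        = fun t : ℝ => 2 * (t * Real.exp (-(1/B) * t ^ 2)) := by
      funext t
      have : -t ^ 2 / B = -(1/B) * t ^ 2 := by ring
      rw [this]; ring
    rw [this]; exact h
  refine ⟨hint.integrableOn, ?_⟩
  have hderiv : ∀ x ∈ Set.Ici T, HasDerivAt (fun t : ℝ => -B * Real.exp (-t ^ 2 / B))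
      (2 * x * Real.exp (-x ^ 2 / B)) x := by
    intro x _
    have h1 : HasDerivAt (fun t : ℝ => -t ^ 2 / B) (-(2 * x) / B) x := by
      simpa using ((hasDerivAt_pow 2 x).neg).div_const B
    have h2 := (h1.exp).const_mul (-B)
    refine h2.congr_deriv ?_
    field_simp
  have htends : Tendsto (fun t : ℝ => -B * Real.exp (-t ^ 2 / B)) atTop (nhds 0) := by
    have h1 : Tendsto (fun t : ℝ => -t ^ 2 / B) atTop atBot := by
      have : Tendsto (fun t : ℝ => t ^ 2 / B) atTop atTop :=
        (tendsto_pow_atTop two_ne_zero).atTop_div_const hB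
      exact (tendsto_neg_atTop_atBot.comp this).congr (fun t => (neg_div _ _).symm)
    have := (Real.tendsto_exp_atBot.comp h1).const_mul (-B)
    simpa using this
  have := integral_Ioi_of_hasDerivAt_of_tendsto' hderiv hint.integrableOn htends
  rw [this]; ring
open scoped ENNReal

lemma aux_mono {B u v : ℝ} (hB : 0 < B) (hv : B ≤ v) (huv : v ≤ u) :
    u * Real.exp (-u / B) ≤ v * Real.exp (-v / B) := by
  have hv0 : 0 < v := hB.trans_le hv
  have h1 : u / v ≤ Real.exp ((u - v) / B) := by
    have h2 : (u - v) / v ≤ (u - v) / B := by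
      apply div_le_div_of_nonneg_left (by linarith) hB hv
    calc u / v = (u - v) / v + 1 := by field_simp; ring
    _ ≤ Real.exp ((u - v) / v) := by
        have := Real.add_one_le_exp ((u - v) / v); linarith
    _ ≤ Real.exp ((u - v) / B) := Real.exp_le_exp.2 h2
  have h4 : u ≤ v * Real.exp ((u - v) / B) := by
    have := mul_le_mul_of_nonneg_left h1 hv0.le
    rwa [mul_div_cancel₀ _ hv0.ne'] at this
  calc u * Real.exp (-u / B) ≤ (v * Real.exp ((u - v) / B)) * Real.exp (-u / B) := by
        apply mul_le_mul_of_nonneg_right h4 (Real.exp_pos _).le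
  _ = v * Real.exp (-v / B) := by
        rw [mul_assoc, ← Real.exp_add]
        congr 2
        field_simp
        ring

lemma aux_convert (ρ : Measure ℝ) [IsFiniteMeasure ρ] {T : ℝ} (hT : 0 ≤ T)
    {S : Set ℝ} (h2 : IntegrableOn (fun y : ℝ => y ^ 2) S ρ)
    {m : ℝ → ℝ≥0∞} (hm : Measurable m) (hmfin : ∀ t, m t ≠ ⊤)
    (key : ∫⁻ y in S, ENNReal.ofReal (y ^ 2) ∂ρ
      = ρ S * ENNReal.ofReal (T ^ 2) + ∫⁻ t in Set.Ioi T, m t * ENNReal.ofReal (2 * t)) :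
    IntegrableOn (fun t => 2 * t * (m t).toReal) (Set.Ioi T) volume ∧
      ∫ y in S, y ^ 2 ∂ρ = T ^ 2 * (ρ S).toReal + ∫ t in Set.Ioi T, 2 * t * (m t).toReal := by
  set W : ℝ → ℝ≥0∞ := fun t => m t * ENNReal.ofReal (2 * t) with hW
  have hWm : Measurable W := hm.mul (ENNReal.measurable_ofReal.comp (measurable_const.mul measurable_id))
  have hWfin : ∀ t, W t ≠ ⊤ := fun t => ENNReal.mul_ne_top (hmfin t) ENNReal.ofReal_ne_top
  have hfin1 : ∫⁻ y in S, ENNReal.ofReal (y ^ 2) ∂ρ ≠ ⊤ := h2.lintegral_lt_top.ne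
  have hJ : ∫⁻ t in Set.Ioi T, W t ≠ ⊤ := by
    intro h
    rw [key, h] at hfin1
    simp at hfin1
  have hIntW : Integrable (fun t => (W t).toReal) (volume.restrict (Set.Ioi T)) :=
    integrable_toReal_of_lintegral_ne_top hWm.aemeasurable hJ
  have hcong : ∀ᵐ t ∂(volume.restrict (Set.Ioi T)),
      (W t).toReal = 2 * t * (m t).toReal := by
    rw [ae_restrict_iff' measurableSet_Ioi]
    refine Eventually.of_forall fun t ht => ?_
    have ht0 : (0:ℝ) ≤ 2 * t := by have := hT.trans_lt ht; linarith
    rw [hW]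
    simp only [ENNReal.toReal_mul, ENNReal.toReal_ofReal ht0]
    ring
  have hInt : IntegrableOn (fun t => 2 * t * (m t).toReal) (Set.Ioi T) volume :=
    hIntW.congr hcong
  refine ⟨hInt, ?_⟩
  have hreal1 : ∫ y in S, y ^ 2 ∂ρ = (∫⁻ y in S, ENNReal.ofReal (y ^ 2) ∂ρ).toReal := by
    rw [integral_eq_lintegral_of_nonneg_ae (Eventually.of_forall fun y => sq_nonneg y)
      h2.aestronglyMeasurable]
  have hreal2 : ∫ t in Set.Ioi T, 2 * t * (m t).toReal
      = (∫⁻ t in Set.Ioi T, W t).toReal := by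
    rw [← integral_congr_ae hcong, integral_toReal hWm.aemeasurable
      (Eventually.of_forall fun t => (hWfin t).lt_top)]
  rw [hreal1, hreal2, key, ENNReal.toReal_add (by finiteness) hJ,
    ENNReal.toReal_mul, ENNReal.toReal_ofReal (by positivity)]
  ring

lemma aux_ioc {T : ℝ} (hT : 0 ≤ T) :
    ∫⁻ t in Set.Ioc (0:ℝ) T, ENNReal.ofReal (2 * t) = ENNReal.ofReal (T ^ 2) := by
  have hnn : (0 : ℝ → ℝ) ≤ᵐ[volume.restrict (Set.Ioc (0:ℝ) T)] fun t => 2 * t := by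
    rw [EventuallyLE, ae_restrict_iff' measurableSet_Ioc]
    refine Eventually.of_forall fun t ht => ?_
    have h := ht.1
    simp only [Pi.zero_apply]
    linarith
  have hint : IntegrableOn (fun t : ℝ => 2 * t) (Set.Ioc (0:ℝ) T) volume := by
    exact (continuous_const.mul continuous_id).integrableOn_Ioc
  rw [← ofReal_integral_eq_lintegral_ofReal hint hnn]
  congr 1
  rw [← intervalIntegral.integral_of_le hT, intervalIntegral.integral_const_mul, integral_id]
  ring

lemma aux_right (ρ : Measure ℝ) [IsFiniteMeasure ρ]
    (h2 : Integrable (fun y : ℝ => y ^ 2) ρ) {T : ℝ} (hT : 0 ≤ T) :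
    IntegrableOn (fun t => 2 * t * (ρ (Set.Ioi t)).toReal) (Set.Ioi T) volume ∧
      ∫ y in Set.Ioi T, y ^ 2 ∂ρ
        = T ^ 2 * (ρ (Set.Ioi T)).toReal
          + ∫ t in Set.Ioi T, 2 * t * (ρ (Set.Ioi t)).toReal := by
  have hsq : ∀ ω : ℝ, (∫ t in (0:ℝ)..ω, 2 * t) = ω ^ 2 := by
    intro ω
    rw [intervalIntegral.integral_const_mul, integral_id]
    ring
  have hm : Measurable (fun t : ℝ => ρ (Set.Ioi t)) := by
    apply Antitone.measurable
    intro s t hst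
    exact measure_mono (Set.Ioi_subset_Ioi hst)
  have f_nn : (0 : ℝ → ℝ) ≤ᵐ[ρ.restrict (Set.Ioi T)] id := by
    rw [EventuallyLE, ae_restrict_iff' measurableSet_Ioi]
    exact Eventually.of_forall fun y hy => (hT.trans_lt hy).le
  have g_nn : ∀ᵐ t ∂(volume.restrict (Set.Ioi (0:ℝ))), 0 ≤ 2 * t := by
    rw [ae_restrict_iff' measurableSet_Ioi]
    exact Eventually.of_forall fun t ht => by have : (0:ℝ) < t := ht; linarith
  have key := lintegral_comp_eq_lintegral_meas_lt_mul (ρ.restrict (Set.Ioi T))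
    f_nn aemeasurable_id (fun t _ => (continuous_const.mul continuous_id).intervalIntegrable 0 t)
    g_nn
  simp only [id_eq, Pi.mul_apply, hsq] at key
  have hsets : ∀ t : ℝ, {a : ℝ | t < a} = Set.Ioi t := fun t => rfl
  have happ : ∀ t : ℝ, (ρ.restrict (Set.Ioi T)) (Set.Ioi t) = ρ (Set.Ioi t ∩ Set.Ioi T) :=
    fun t => Measure.restrict_apply measurableSet_Ioi
  rw [show Set.Ioi (0:ℝ) = Set.Ioc 0 T ∪ Set.Ioi T from (Set.Ioc_union_Ioi_eq_Ioi hT).symm,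
    lintegral_union measurableSet_Ioi (Set.Ioc_disjoint_Ioi le_rfl)] at key
  have e1 : ∫⁻ t in Set.Ioc (0:ℝ) T, (ρ.restrict (Set.Ioi T)) {a | t < a} * ENNReal.ofReal (2 * t)
      = ρ (Set.Ioi T) * ENNReal.ofReal (T ^ 2) := by
    have : ∀ t ∈ Set.Ioc (0:ℝ) T,
        (ρ.restrict (Set.Ioi T)) {a | t < a} * ENNReal.ofReal (2 * t)
          = ρ (Set.Ioi T) * ENNReal.ofReal (2 * t) := by
      intro t ht
      rw [hsets, happ, Set.inter_eq_right.mpr (Set.Ioi_subset_Ioi ht.2)]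
    rw [setLIntegral_congr_fun measurableSet_Ioc this,
      lintegral_const_mul _ (show Measurable fun t : ℝ => ENNReal.ofReal (2 * t) from (measurable_const.mul measurable_id).ennreal_ofReal)]
    rw [aux_ioc hT]
  have e2 : ∫⁻ t in Set.Ioi T, (ρ.restrict (Set.Ioi T)) {a | t < a} * ENNReal.ofReal (2 * t)
      = ∫⁻ t in Set.Ioi T, ρ (Set.Ioi t) * ENNReal.ofReal (2 * t) := by
    apply setLIntegral_congr_fun measurableSet_Ioi
    intro t ht; dsimp only
    rw [hsets, happ, Set.inter_eq_left.mpr (Set.Ioi_subset_Ioi ht.le)]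
  rw [e1, e2] at key
  exact aux_convert ρ hT h2.integrableOn hm (fun t => measure_ne_top ρ _) key

lemma aux_left (ρ : Measure ℝ) [IsFiniteMeasure ρ]
    (h2 : Integrable (fun y : ℝ => y ^ 2) ρ) {T : ℝ} (hT : 0 ≤ T) :
    IntegrableOn (fun t => 2 * t * (ρ (Set.Iic (-t))).toReal) (Set.Ioi T) volume ∧
      ∫ y in Set.Iic (-T), y ^ 2 ∂ρ
        = T ^ 2 * (ρ (Set.Iic (-T))).toReal
          + ∫ t in Set.Ioi T, 2 * t * (ρ (Set.Iic (-t))).toReal := by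
  have hsq : ∀ ω : ℝ, (∫ t in (0:ℝ)..ω, 2 * t) = ω ^ 2 := by
    intro ω
    rw [intervalIntegral.integral_const_mul, integral_id]
    ring
  have hm : Measurable (fun t : ℝ => ρ (Set.Iic (-t))) := by
    apply Antitone.measurable
    intro s t hst
    exact measure_mono (Set.Iic_subset_Iic.mpr (neg_le_neg hst))
  have f_nn : (0 : ℝ → ℝ) ≤ᵐ[ρ.restrict (Set.Iic (-T))] (fun y => -y) := by
    rw [EventuallyLE, ae_restrict_iff' measurableSet_Iic]
    refine Eventually.of_forall fun y hy => ?_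
    simp only [Pi.zero_apply]
    have : y ≤ -T := hy
    linarith
  have g_nn : ∀ᵐ t ∂(volume.restrict (Set.Ioi (0:ℝ))), 0 ≤ 2 * t := by
    rw [ae_restrict_iff' measurableSet_Ioi]
    exact Eventually.of_forall fun t ht => by have : (0:ℝ) < t := ht; linarith
  have key := lintegral_comp_eq_lintegral_meas_le_mul (ρ.restrict (Set.Iic (-T)))
    f_nn measurable_neg.aemeasurable
    (fun t _ => (continuous_const.mul continuous_id).intervalIntegrable 0 t) g_nn
  simp only [id_eq, Pi.mul_apply, hsq, neg_sq] at key
  have hsets : ∀ t : ℝ, {a : ℝ | t ≤ -a} = Set.Iic (-t) := by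
    intro t
    ext a
    simp only [Set.mem_setOf_eq, Set.mem_Iic, le_neg]
  have happ : ∀ t : ℝ, (ρ.restrict (Set.Iic (-T))) (Set.Iic (-t)) = ρ (Set.Iic (-t) ∩ Set.Iic (-T)) :=
    fun t => Measure.restrict_apply measurableSet_Iic
  rw [show Set.Ioi (0:ℝ) = Set.Ioc 0 T ∪ Set.Ioi T from (Set.Ioc_union_Ioi_eq_Ioi hT).symm,
    lintegral_union measurableSet_Ioi (Set.Ioc_disjoint_Ioi le_rfl)] at key
  have e1 : ∫⁻ t in Set.Ioc (0:ℝ) T, (ρ.restrict (Set.Iic (-T))) {a | t ≤ -a} * ENNReal.ofReal (2 * t)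
      = ρ (Set.Iic (-T)) * ENNReal.ofReal (T ^ 2) := by
    have : ∀ t ∈ Set.Ioc (0:ℝ) T,
        (ρ.restrict (Set.Iic (-T))) {a | t ≤ -a} * ENNReal.ofReal (2 * t)
          = ρ (Set.Iic (-T)) * ENNReal.ofReal (2 * t) := by
      intro t ht
      rw [hsets, happ, Set.inter_eq_right.mpr (Set.Iic_subset_Iic.mpr (neg_le_neg ht.2))]
    rw [setLIntegral_congr_fun measurableSet_Ioc this,
      lintegral_const_mul _ (show Measurable fun t : ℝ => ENNReal.ofReal (2 * t) from (measurable_const.mul measurable_id).ennreal_ofReal)]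
    rw [aux_ioc hT]
  have e2 : ∫⁻ t in Set.Ioi T, (ρ.restrict (Set.Iic (-T))) {a | t ≤ -a} * ENNReal.ofReal (2 * t)
      = ∫⁻ t in Set.Ioi T, ρ (Set.Iic (-t)) * ENNReal.ofReal (2 * t) := by
    apply setLIntegral_congr_fun measurableSet_Ioi
    intro t ht; dsimp only
    rw [hsets, happ, Set.inter_eq_left.mpr (Set.Iic_subset_Iic.mpr (neg_le_neg ht.le))]
  rw [e1, e2] at key
  exact aux_convert ρ hT h2.integrableOn hm (fun t => measure_ne_top ρ _) key

set_option maxHeartbeats 1000000 in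
/-- **Proposition 3.2.** If `F` and `G = ν((-∞,·])` have finite and equal second moments and
`|G(x)| ≤ A e^{-x²/B}` for `x ≤ 0`, `|1-G(x)| ≤ A e^{-x²/B}` for `x ≥ 0` (with `A, B > 0`),
then `sup_x [x²|F(x)-G(x)|] ≤ 13·A·B·Δ·log(e + 1/Δ)`, provided `Δ > 0`. -/
theorem stmt_5
    (μ : Measure ℝ) [IsProbabilityMeasure μ]
    (ν₁ ν₂ : Measure ℝ) [IsFiniteMeasure ν₁] [IsFiniteMeasure ν₂]
    (hν : (ν₁ Set.univ).toReal - (ν₂ Set.univ).toReal = 1)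
    (F G : ℝ → ℝ)
    (hFdef : ∀ x, F x = (μ (Set.Iic x)).toReal)
    (hGdef : ∀ x, G x = (ν₁ (Set.Iic x)).toReal - (ν₂ (Set.Iic x)).toReal)
    (hμ2 : Integrable (fun x : ℝ => x ^ 2) μ)
    (hν₁2 : Integrable (fun x : ℝ => x ^ 2) ν₁)
    (hν₂2 : Integrable (fun x : ℝ => x ^ 2) ν₂)
    (hmom : ∫ x, x ^ 2 ∂μ = (∫ x, x ^ 2 ∂ν₁) - ∫ x, x ^ 2 ∂ν₂)
    (Δ : ℝ) (hΔ : Δ = ⨆ x : ℝ, |F x - G x|) (hΔpos : 0 < Δ)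
    (A B : ℝ) (hA : 0 < A) (hB : 0 < B)
    (hGneg : ∀ x : ℝ, x ≤ 0 → |G x| ≤ A * Real.exp (-x ^ 2 / B))
    (hGpos : ∀ x : ℝ, 0 ≤ x → |1 - G x| ≤ A * Real.exp (-x ^ 2 / B)) :
    ∀ x : ℝ, x ^ 2 * |F x - G x| ≤
      13 * A * B * Δ * Real.log (Real.exp 1 + 1 / Δ) := by
  -- basic facts about F
  have hF0 : ∀ z, 0 ≤ F z := fun z => (hFdef z) ▸ ENNReal.toReal_nonneg
  have hF1 : ∀ z, F z ≤ 1 := by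
    intro z
    rw [hFdef]
    have h := ENNReal.toReal_mono (measure_ne_top μ Set.univ)
      (measure_mono (Set.subset_univ (Set.Iic z)))
    simpa [measure_univ] using h
  have hFIoi : ∀ z, (μ (Set.Ioi z)).toReal = 1 - F z := by
    intro z
    rw [hFdef, ← Set.compl_Iic, measure_compl measurableSet_Iic (measure_ne_top μ _),
      measure_univ, ENNReal.toReal_sub_of_le prob_le_one ENNReal.one_ne_top, ENNReal.toReal_one]
  have hGIoi : ∀ z, (ν₁ (Set.Ioi z)).toReal - (ν₂ (Set.Ioi z)).toReal = 1 - G z := by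
    intro z
    have e₁ : (ν₁ (Set.Ioi z)).toReal = (ν₁ Set.univ).toReal - (ν₁ (Set.Iic z)).toReal := by
      rw [← Set.compl_Iic, measure_compl measurableSet_Iic (measure_ne_top _ _),
        ENNReal.toReal_sub_of_le (measure_mono (Set.subset_univ _)) (measure_ne_top _ _)]
    have e₂ : (ν₂ (Set.Ioi z)).toReal = (ν₂ Set.univ).toReal - (ν₂ (Set.Iic z)).toReal := by
      rw [← Set.compl_Iic, measure_compl measurableSet_Iic (measure_ne_top _ _),
        ENNReal.toReal_sub_of_le (measure_mono (Set.subset_univ _)) (measure_ne_top _ _)]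
    rw [e₁, e₂, hGdef]
    linarith
  -- Δ dominates pointwise
  have hΔle : ∀ z, |F z - G z| ≤ Δ := by
    have hbdd : BddAbove (Set.range fun z => |F z - G z|) := by
      refine ⟨1 + ((ν₁ Set.univ).toReal + (ν₂ Set.univ).toReal), ?_⟩
      rintro _ ⟨z, rfl⟩
      have h1 : |F z| ≤ 1 := abs_le.2 ⟨by linarith [hF0 z], hF1 z⟩
      have h2 : |G z| ≤ (ν₁ Set.univ).toReal + (ν₂ Set.univ).toReal := by
        rw [hGdef, sub_eq_add_neg]
        refine (abs_add_le _ _).trans ?_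
        rw [abs_neg, abs_of_nonneg ENNReal.toReal_nonneg, abs_of_nonneg ENNReal.toReal_nonneg]
        exact add_le_add
          (ENNReal.toReal_mono (measure_ne_top _ _) (measure_mono (Set.subset_univ _)))
          (ENNReal.toReal_mono (measure_ne_top _ _) (measure_mono (Set.subset_univ _)))
      calc |F z - G z| = |F z + -(G z)| := by rw [sub_eq_add_neg]
      _ ≤ |F z| + |-(G z)| := abs_add_le _ _
      _ = |F z| + |G z| := by rw [abs_neg]
      _ ≤ 1 + ((ν₁ Set.univ).toReal + (ν₂ Set.univ).toReal) := add_le_add h1 h2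
    intro z
    rw [hΔ]
    exact le_ciSup hbdd z
  -- A is at least 1/2
  have hA2 : 1 ≤ 2 * A := by
    have hz : A * Real.exp (-(0:ℝ) ^ 2 / B) = A := by norm_num
    have h0 : |G 0| ≤ A := by have := hGneg 0 le_rfl; rwa [hz] at this
    have h1 : |1 - G 0| ≤ A := by have := hGpos 0 le_rfl; rwa [hz] at this
    have h2 : (1:ℝ) = |G 0 + (1 - G 0)| := by norm_num
    have h3 := (abs_add_le (G 0) (1 - G 0))
    linarith
  set L := Real.log (Real.exp 1 + 1 / Δ) with hLdef
  have hL1 : 1 ≤ L := by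
    have h1 : Real.exp 1 ≤ Real.exp 1 + 1 / Δ := by
      have : 0 < 1 / Δ := by positivity
      linarith
    calc (1:ℝ) = Real.log (Real.exp 1) := (Real.log_exp 1).symm
    _ ≤ L := (Real.log_le_log_iff (Real.exp_pos 1) (by positivity)).2 h1
  have hLpos : (0:ℝ) < L := lt_of_lt_of_le one_pos hL1
  have hexpL : Real.exp (-L) ≤ Δ := by
    have h1 : Real.exp L = Real.exp 1 + 1 / Δ := Real.exp_log (by positivity)
    rw [Real.exp_neg, h1]
    have h2 : 1 / Δ ≤ Real.exp 1 + 1 / Δ := by linarith [Real.exp_pos 1]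
    have h3 : (Real.exp 1 + 1 / Δ)⁻¹ ≤ (1 / Δ)⁻¹ :=
      inv_anti₀ (by positivity) h2
    simpa [one_div] using h3
  set T := Real.sqrt (B * L) with hTdef
  have hT0 : 0 ≤ T := Real.sqrt_nonneg _
  have hT2 : T ^ 2 = B * L := Real.sq_sqrt (by positivity)
  have hTBL : -T ^ 2 / B = -L := by rw [hT2]; field_simp
  -- total second-moment identity
  have Etot : ∀ (ρ : Measure ℝ) [IsFiniteMeasure ρ], Integrable (fun y : ℝ => y ^ 2) ρ →
      ∫ y, y ^ 2 ∂ρ = ∫ t in Set.Ioi (0:ℝ),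
        (2 * t * (ρ (Set.Ioi t)).toReal + 2 * t * (ρ (Set.Iic (-t))).toReal) := by
    intro ρ inst h2
    obtain ⟨iR, eR⟩ := aux_right ρ h2 (le_refl (0:ℝ))
    obtain ⟨iL, eL⟩ := aux_left ρ h2 (le_refl (0:ℝ))
    have hsplit : (∫ y in Set.Iic (-(0:ℝ)), y ^ 2 ∂ρ) + (∫ y in Set.Ioi (0:ℝ), y ^ 2 ∂ρ)
        = ∫ y, y ^ 2 ∂ρ := by
      rw [neg_zero, ← Set.compl_Iic]
      exact integral_add_compl measurableSet_Iic h2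
    rw [← hsplit, eR, eL, integral_add iR iL]
    ring
  -- instantiate the tail identities
  obtain ⟨iμR0, _⟩ := aux_right μ hμ2 (le_refl (0:ℝ))
  obtain ⟨iμL0, _⟩ := aux_left μ hμ2 (le_refl (0:ℝ))
  obtain ⟨i₁R0, _⟩ := aux_right ν₁ hν₁2 (le_refl (0:ℝ))
  obtain ⟨i₁L0, _⟩ := aux_left ν₁ hν₁2 (le_refl (0:ℝ))
  obtain ⟨i₂R0, _⟩ := aux_right ν₂ hν₂2 (le_refl (0:ℝ))
  obtain ⟨i₂L0, _⟩ := aux_left ν₂ hν₂2 (le_refl (0:ℝ))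
  obtain ⟨_, eμRT⟩ := aux_right μ hμ2 hT0
  obtain ⟨_, eμLT⟩ := aux_left μ hμ2 hT0
  set wμ : ℝ → ℝ := fun t => 2 * t * (μ (Set.Ioi t)).toReal + 2 * t * (μ (Set.Iic (-t))).toReal
    with hwμdef
  set w₁ : ℝ → ℝ := fun t => 2 * t * (ν₁ (Set.Ioi t)).toReal + 2 * t * (ν₁ (Set.Iic (-t))).toReal
    with hw₁def
  set w₂ : ℝ → ℝ := fun t => 2 * t * (ν₂ (Set.Ioi t)).toReal + 2 * t * (ν₂ (Set.Iic (-t))).toReal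
    with hw₂def
  have iμ0 : IntegrableOn wμ (Set.Ioi (0:ℝ)) volume := iμR0.add iμL0
  have i₁0 : IntegrableOn w₁ (Set.Ioi (0:ℝ)) volume := i₁R0.add i₁L0
  have i₂0 : IntegrableOn w₂ (Set.Ioi (0:ℝ)) volume := i₂R0.add i₂L0
  have iμT : IntegrableOn wμ (Set.Ioi T) volume := iμ0.mono_set (Set.Ioi_subset_Ioi hT0)
  have i₁T : IntegrableOn w₁ (Set.Ioi T) volume := i₁0.mono_set (Set.Ioi_subset_Ioi hT0)
  have i₂T : IntegrableOn w₂ (Set.Ioi T) volume := i₂0.mono_set (Set.Ioi_subset_Ioi hT0)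
  have iμM : IntegrableOn wμ (Set.Ioc 0 T) volume := iμ0.mono_set Set.Ioc_subset_Ioi_self
  have i₁M : IntegrableOn w₁ (Set.Ioc 0 T) volume := i₁0.mono_set Set.Ioc_subset_Ioi_self
  have i₂M : IntegrableOn w₂ (Set.Ioc 0 T) volume := i₂0.mono_set Set.Ioc_subset_Ioi_self
  have hsplitμ : ∫ t in Set.Ioi (0:ℝ), wμ t
      = (∫ t in Set.Ioc 0 T, wμ t) + ∫ t in Set.Ioi T, wμ t := by
    rw [← Set.Ioc_union_Ioi_eq_Ioi hT0]
    exact setIntegral_union (Set.Ioc_disjoint_Ioi le_rfl) measurableSet_Ioi iμM iμT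
  have hsplit₁ : ∫ t in Set.Ioi (0:ℝ), w₁ t
      = (∫ t in Set.Ioc 0 T, w₁ t) + ∫ t in Set.Ioi T, w₁ t := by
    rw [← Set.Ioc_union_Ioi_eq_Ioi hT0]
    exact setIntegral_union (Set.Ioc_disjoint_Ioi le_rfl) measurableSet_Ioi i₁M i₁T
  have hsplit₂ : ∫ t in Set.Ioi (0:ℝ), w₂ t
      = (∫ t in Set.Ioc 0 T, w₂ t) + ∫ t in Set.Ioi T, w₂ t := by
    rw [← Set.Ioc_union_Ioi_eq_Ioi hT0]
    exact setIntegral_union (Set.Ioc_disjoint_Ioi le_rfl) measurableSet_Ioi i₂M i₂T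
  have hmom' : ∫ t in Set.Ioi (0:ℝ), wμ t
      = (∫ t in Set.Ioi (0:ℝ), w₁ t) - ∫ t in Set.Ioi (0:ℝ), w₂ t := by
    rw [← Etot μ hμ2, ← Etot ν₁ hν₁2, ← Etot ν₂ hν₂2]
    exact hmom
  -- key identity for the tail integral
  have tail_eq : (∫ y in Set.Ioi T, y ^ 2 ∂μ) + (∫ y in Set.Iic (-T), y ^ 2 ∂μ)
      = T ^ 2 * ((μ (Set.Ioi T)).toReal + (μ (Set.Iic (-T))).toReal)
        + ∫ t in Set.Ioi T, wμ t := by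
    rw [eμRT, eμLT, hwμdef,
      integral_add (iμR0.mono_set (Set.Ioi_subset_Ioi hT0))
        (iμL0.mono_set (Set.Ioi_subset_Ioi hT0))]
    ring
  -- bound 1 : tail of the signed measure part
  have hb1 : (∫ t in Set.Ioi T, w₁ t) - (∫ t in Set.Ioi T, w₂ t)
      ≤ 2 * A * (B * Real.exp (-L)) := by
    obtain ⟨ig, eg⟩ := aux_gauss hB T
    have hgint : Integrable (fun t => (2 * A) * (2 * t * Real.exp (-t ^ 2 / B)))
        (volume.restrict (Set.Ioi T)) := ig.const_mul _
    have hptw : ∀ᵐ t ∂(volume.restrict (Set.Ioi T)),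
        ‖w₁ t - w₂ t‖ ≤ (2 * A) * (2 * t * Real.exp (-t ^ 2 / B)) := by
      rw [ae_restrict_iff' measurableSet_Ioi]
      refine Eventually.of_forall fun t ht => ?_
      have htT : T < t := ht
      have ht0 : 0 < t := lt_of_le_of_lt hT0 htT
      have h1 : |1 - G t| ≤ A * Real.exp (-t ^ 2 / B) := hGpos t ht0.le
      have h2 : |G (-t)| ≤ A * Real.exp (-t ^ 2 / B) := by
        have := hGneg (-t) (by linarith)
        rwa [show (-t) ^ 2 = t ^ 2 by ring] at this
      have heq : w₁ t - w₂ t = 2 * t * ((1 - G t) + G (-t)) := by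
        have e1 : w₁ t - w₂ t
            = 2 * t * ((ν₁ (Set.Ioi t)).toReal - (ν₂ (Set.Ioi t)).toReal)
              + 2 * t * ((ν₁ (Set.Iic (-t))).toReal - (ν₂ (Set.Iic (-t))).toReal) := by
          rw [hw₁def, hw₂def]; ring
        rw [e1, hGIoi t, ← hGdef (-t)]
        ring
      rw [heq, Real.norm_eq_abs]
      calc |2 * t * ((1 - G t) + G (-t))| = 2 * t * |(1 - G t) + G (-t)| := by
            rw [abs_mul, abs_of_nonneg (by linarith : (0:ℝ) ≤ 2 * t)]
      _ ≤ 2 * t * (|1 - G t| + |G (-t)|) :=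
            mul_le_mul_of_nonneg_left (abs_add_le _ _) (by linarith)
      _ ≤ 2 * t * (A * Real.exp (-t ^ 2 / B) + A * Real.exp (-t ^ 2 / B)) :=
            mul_le_mul_of_nonneg_left (add_le_add h1 h2) (by linarith)
      _ = (2 * A) * (2 * t * Real.exp (-t ^ 2 / B)) := by ring
    have hnorm := norm_integral_le_of_norm_le hgint hptw
    have hsub : ∫ t in Set.Ioi T, (w₁ t - w₂ t)
        = (∫ t in Set.Ioi T, w₁ t) - ∫ t in Set.Ioi T, w₂ t := integral_sub i₁T i₂T
    have hgval : ∫ t in Set.Ioi T, (2 * A) * (2 * t * Real.exp (-t ^ 2 / B))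
        = 2 * A * (B * Real.exp (-L)) := by
      rw [integral_const_mul, eg, hTBL]
    rw [← hsub]
    calc ∫ t in Set.Ioi T, (w₁ t - w₂ t)
        ≤ |∫ t in Set.Ioi T, (w₁ t - w₂ t)| := le_abs_self _
    _ = ‖∫ t in Set.Ioi T, (w₁ t - w₂ t)‖ := (Real.norm_eq_abs _).symm
    _ ≤ ∫ t in Set.Ioi T, (2 * A) * (2 * t * Real.exp (-t ^ 2 / B)) := hnorm
    _ = 2 * A * (B * Real.exp (-L)) := hgval
  -- bound 2 : middle region
  have hb2 : ((∫ t in Set.Ioc 0 T, w₁ t) - ∫ t in Set.Ioc 0 T, w₂ t)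
      - ∫ t in Set.Ioc 0 T, wμ t ≤ 2 * Δ * T ^ 2 := by
    have hgint : Integrable (fun t : ℝ => (2 * Δ) * (2 * t))
        (volume.restrict (Set.Ioc (0:ℝ) T)) :=
      ((continuous_const.mul (continuous_const.mul continuous_id)).integrableOn_Ioc)
    have hptw : ∀ᵐ t ∂(volume.restrict (Set.Ioc (0:ℝ) T)),
        ‖w₁ t - w₂ t - wμ t‖ ≤ (2 * Δ) * (2 * t) := by
      rw [ae_restrict_iff' measurableSet_Ioc]
      refine Eventually.of_forall fun t ht => ?_
      have ht0 : 0 < t := ht.1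
      have heq : w₁ t - w₂ t - wμ t
          = 2 * t * (((F t - G t)) - ((F (-t)) - G (-t))) := by
        have e1 : w₁ t - w₂ t - wμ t
            = 2 * t * (((ν₁ (Set.Ioi t)).toReal - (ν₂ (Set.Ioi t)).toReal)
                - (μ (Set.Ioi t)).toReal)
              + 2 * t * (((ν₁ (Set.Iic (-t))).toReal - (ν₂ (Set.Iic (-t))).toReal)
                - (μ (Set.Iic (-t))).toReal) := by
          rw [hw₁def, hw₂def, hwμdef]; ring
        rw [e1, hGIoi t, hFIoi t, ← hGdef (-t), ← hFdef (-t)]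
        ring
      rw [heq, Real.norm_eq_abs]
      have hd1 : |F t - G t| ≤ Δ := hΔle t
      have hd2 : |F (-t) - G (-t)| ≤ Δ := hΔle (-t)
      calc |2 * t * ((F t - G t) - (F (-t) - G (-t)))|
          = 2 * t * |(F t - G t) - (F (-t) - G (-t))| := by
            rw [abs_mul, abs_of_nonneg (by linarith : (0:ℝ) ≤ 2 * t)]
      _ ≤ 2 * t * (|F t - G t| + |F (-t) - G (-t)|) := by
            refine mul_le_mul_of_nonneg_left ?_ (by linarith)
            rw [sub_eq_add_neg]
            exact (abs_add_le _ _).trans (by rw [abs_neg])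
      _ ≤ 2 * t * (Δ + Δ) := mul_le_mul_of_nonneg_left (add_le_add hd1 hd2) (by linarith)
      _ = (2 * Δ) * (2 * t) := by ring
    have hnorm := norm_integral_le_of_norm_le hgint hptw
    have hsub : ∫ t in Set.Ioc 0 T, (w₁ t - w₂ t - wμ t)
        = ((∫ t in Set.Ioc 0 T, w₁ t) - ∫ t in Set.Ioc 0 T, w₂ t)
          - ∫ t in Set.Ioc 0 T, wμ t := by
      have h1 : ∫ t in Set.Ioc 0 T, (w₁ t - w₂ t - wμ t)
          = (∫ t in Set.Ioc 0 T, (w₁ t - w₂ t)) - ∫ t in Set.Ioc 0 T, wμ t :=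
        integral_sub (i₁M.sub i₂M) iμM
      have h2 : ∫ t in Set.Ioc 0 T, (w₁ t - w₂ t)
          = (∫ t in Set.Ioc 0 T, w₁ t) - ∫ t in Set.Ioc 0 T, w₂ t := integral_sub i₁M i₂M
      rw [h1, h2]
    have hgval : ∫ t in Set.Ioc (0:ℝ) T, (2 * Δ) * (2 * t) = 2 * Δ * T ^ 2 := by
      rw [← intervalIntegral.integral_of_le hT0, intervalIntegral.integral_const_mul,
        intervalIntegral.integral_const_mul, integral_id]
      ring
    rw [← hsub]
    calc ∫ t in Set.Ioc 0 T, (w₁ t - w₂ t - wμ t)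
        ≤ |∫ t in Set.Ioc 0 T, (w₁ t - w₂ t - wμ t)| := le_abs_self _
    _ = ‖∫ t in Set.Ioc 0 T, (w₁ t - w₂ t - wμ t)‖ := (Real.norm_eq_abs _).symm
    _ ≤ ∫ t in Set.Ioc (0:ℝ) T, (2 * Δ) * (2 * t) := hnorm
    _ = 2 * Δ * T ^ 2 := hgval
  -- bound 3 : the boundary terms
  have hb3 : (μ (Set.Ioi T)).toReal + (μ (Set.Iic (-T))).toReal
      ≤ 2 * A * Real.exp (-L) + 2 * Δ := by
    have hg1 : |1 - G T| ≤ A * Real.exp (-L) := by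
      have := hGpos T hT0
      rwa [hTBL] at this
    have hg2 : |G (-T)| ≤ A * Real.exp (-L) := by
      have := hGneg (-T) (by linarith)
      rwa [show (-T) ^ 2 = T ^ 2 by ring, hTBL] at this
    have hd1 : |F T - G T| ≤ Δ := hΔle T
    have hd2 : |F (-T) - G (-T)| ≤ Δ := hΔle (-T)
    rw [hFIoi T, ← hFdef (-T)]
    have c1 := abs_le.1 hg1
    have c2 := abs_le.1 hg2
    have c3 := abs_le.1 hd1
    have c4 := abs_le.1 hd2
    linarith [c1.1, c1.2, c2.1, c2.2, c3.1, c3.2, c4.1, c4.2]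
    -- nonnegativity of the two tail integrals
  have hIocnn : 0 ≤ ∫ y in Set.Iic (-T), y ^ 2 ∂μ :=
    setIntegral_nonneg measurableSet_Iic fun y _ => sq_nonneg y
  have hIoinn : 0 ≤ ∫ y in Set.Ioi T, y ^ 2 ∂μ :=
    setIntegral_nonneg measurableSet_Ioi fun y _ => sq_nonneg y
  have hwT : ∫ t in Set.Ioi T, wμ t ≤ 2 * A * (B * Real.exp (-L)) + 2 * Δ * T ^ 2 := by
    linarith [hsplitμ, hsplit₁, hsplit₂, hmom', hb1, hb2]
  have hTail : (∫ y in Set.Ioi T, y ^ 2 ∂μ) + (∫ y in Set.Iic (-T), y ^ 2 ∂μ)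
      ≤ 12 * A * B * (Δ * L) := by
    rw [tail_eq]
    have h5 : T ^ 2 * ((μ (Set.Ioi T)).toReal + (μ (Set.Iic (-T))).toReal)
        ≤ (B * L) * (2 * A * Real.exp (-L) + 2 * Δ) := by
      rw [hT2]
      exact mul_le_mul_of_nonneg_left hb3 (by positivity)
    have c1 : 2 * A * (B * L) * Real.exp (-L) ≤ 2 * A * (B * L) * Δ :=
      mul_le_mul_of_nonneg_left hexpL (by positivity)
    have c2 : 2 * A * B * Real.exp (-L) ≤ 2 * A * B * Δ :=
      mul_le_mul_of_nonneg_left hexpL (by positivity)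
    have c3 : 2 * A * B * Δ ≤ 2 * A * B * Δ * L := le_mul_of_one_le_right (by positivity) hL1
    have c4 : 2 * (B * L) * Δ ≤ (2 * (B * L) * Δ) * (2 * A) :=
      le_mul_of_one_le_right (by positivity) hA2
    have c5 : 2 * Δ * T ^ 2 = 2 * (B * L) * Δ := by rw [hT2]; ring
    have e1 : (B * L) * (2 * A * Real.exp (-L) + 2 * Δ)
        = 2 * A * (B * L) * Real.exp (-L) + 2 * (B * L) * Δ := by ring
    linarith [h5, hwT, c1, c2, c3, c4, c5, e1]
  -- the pointwise bound
  intro x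
  rcases le_or_gt (x ^ 2) (B * L) with hx2 | hx2
  · have h1 : x ^ 2 * |F x - G x| ≤ (B * L) * Δ :=
      mul_le_mul hx2 (hΔle x) (abs_nonneg _) (by positivity)
    have h2 : (B * L) * Δ ≤ 13 * A * B * Δ * L := by
      have c4 : (B * L) * Δ ≤ ((B * L) * Δ) * (2 * A) :=
        le_mul_of_one_le_right (by positivity) hA2
      have hpos : 0 ≤ A * B * L * Δ := by positivity
      linarith [c4, hpos]
    linarith
  · have hxne : T ^ 2 < x ^ 2 := by rw [hT2]; exact hx2
    have hBBL : B ≤ B * L := le_mul_of_one_le_right hB.le hL1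
    have hmono : x ^ 2 * Real.exp (-x ^ 2 / B) ≤ (B * L) * Real.exp (-L) := by
      have h := aux_mono hB hBBL (le_of_lt (by rw [← hT2]; exact hxne))
      rwa [show -(B * L) / B = -L by rw [mul_comm B L, neg_div, mul_div_assoc, div_self hB.ne', mul_one]] at h
    have hxtail : x ^ 2 * (A * Real.exp (-x ^ 2 / B)) ≤ A * (B * L) * Δ := by
      calc x ^ 2 * (A * Real.exp (-x ^ 2 / B)) = A * (x ^ 2 * Real.exp (-x ^ 2 / B)) := by ring
      _ ≤ A * ((B * L) * Real.exp (-L)) := mul_le_mul_of_nonneg_left hmono hA.le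
      _ ≤ A * ((B * L) * Δ) :=
          mul_le_mul_of_nonneg_left (mul_le_mul_of_nonneg_left hexpL (by positivity)) hA.le
      _ = A * (B * L) * Δ := by ring
    have hfin : 12 * A * B * (Δ * L) + A * (B * L) * Δ = 13 * A * B * Δ * L := by ring
    rcases lt_or_ge 0 x with hxpos | hxneg
    · -- positive side
      have hTx : T < x := by
        have h := Real.sqrt_lt_sqrt (sq_nonneg T) hxne
        rwa [Real.sqrt_sq hT0, Real.sqrt_sq hxpos.le] at h
      have habs : |F x - G x| ≤ (1 - F x) + |1 - G x| := by
        have h0 : F x - G x = (1 - G x) + -(1 - F x) := by ring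
        rw [h0]
        refine (abs_add_le _ _).trans ?_
        rw [abs_neg, abs_of_nonneg (show (0:ℝ) ≤ 1 - F x by linarith [hF1 x])]
        linarith
      have hp1 : x ^ 2 * (1 - F x)
          ≤ (∫ y in Set.Ioi T, y ^ 2 ∂μ) + (∫ y in Set.Iic (-T), y ^ 2 ∂μ) := by
        have hc : x ^ 2 * (μ (Set.Ioi x)).toReal ≤ ∫ y in Set.Ioi x, y ^ 2 ∂μ := by
          have hint : IntegrableOn (fun _ : ℝ => x ^ 2) (Set.Ioi x) μ :=
            integrableOn_const (measure_ne_top μ _)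
          have hmono2 := setIntegral_mono_on hint hμ2.integrableOn measurableSet_Ioi
            (fun y hy => by
              have hxy : x ≤ y := le_of_lt hy
              exact pow_le_pow_left₀ hxpos.le hxy 2)
          rw [setIntegral_const, smul_eq_mul, measureReal_def] at hmono2
          linarith
        have hsubset : ∫ y in Set.Ioi x, y ^ 2 ∂μ ≤ ∫ y in Set.Ioi T, y ^ 2 ∂μ :=
          setIntegral_mono_set hμ2.integrableOn (Eventually.of_forall fun y => sq_nonneg y)
            (HasSubset.Subset.eventuallyLE (Set.Ioi_subset_Ioi hTx.le))
        rw [← hFIoi x]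
        linarith
      have hp2 : x ^ 2 * |1 - G x| ≤ A * (B * L) * Δ :=
        (mul_le_mul_of_nonneg_left (hGpos x hxpos.le) (sq_nonneg x)).trans hxtail
      have hcomb : x ^ 2 * |F x - G x| ≤ 12 * A * B * (Δ * L) + A * (B * L) * Δ := by
        calc x ^ 2 * |F x - G x| ≤ x ^ 2 * ((1 - F x) + |1 - G x|) :=
              mul_le_mul_of_nonneg_left habs (sq_nonneg x)
        _ = x ^ 2 * (1 - F x) + x ^ 2 * |1 - G x| := by ring
        _ ≤ 12 * A * B * (Δ * L) + A * (B * L) * Δ := add_le_add (hp1.trans hTail) hp2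
      linarith
    · -- negative side
      have hxneg' : x < 0 := by
        rcases hxneg.lt_or_eq with h | h
        · exact h
        · exfalso
          rw [h] at hxne
          norm_num at hxne
          linarith [sq_nonneg T]
      have hTx : x < -T := by
        have h := Real.sqrt_lt_sqrt (sq_nonneg T) hxne
        rw [Real.sqrt_sq hT0, Real.sqrt_sq_eq_abs, abs_of_neg hxneg'] at h
        linarith
      have habs : |F x - G x| ≤ F x + |G x| := by
        rw [sub_eq_add_neg]
        refine (abs_add_le _ _).trans ?_
        rw [abs_neg, abs_of_nonneg (hF0 x)]
      have hp1 : x ^ 2 * F x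
          ≤ (∫ y in Set.Ioi T, y ^ 2 ∂μ) + (∫ y in Set.Iic (-T), y ^ 2 ∂μ) := by
        have hc : x ^ 2 * (μ (Set.Iic x)).toReal ≤ ∫ y in Set.Iic x, y ^ 2 ∂μ := by
          have hint : IntegrableOn (fun _ : ℝ => x ^ 2) (Set.Iic x) μ :=
            integrableOn_const (measure_ne_top μ _)
          have hmono2 := setIntegral_mono_on hint hμ2.integrableOn measurableSet_Iic
            (fun y hy => by
              have hxy : y ≤ x := hy
              calc x ^ 2 = (-x) ^ 2 := by ring
              _ ≤ (-y) ^ 2 := pow_le_pow_left₀ (by linarith) (by linarith) 2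
              _ = y ^ 2 := by ring)
          rw [setIntegral_const, smul_eq_mul, measureReal_def] at hmono2
          linarith
        have hsubset : ∫ y in Set.Iic x, y ^ 2 ∂μ ≤ ∫ y in Set.Iic (-T), y ^ 2 ∂μ :=
          setIntegral_mono_set hμ2.integrableOn (Eventually.of_forall fun y => sq_nonneg y)
            (HasSubset.Subset.eventuallyLE (Set.Iic_subset_Iic.mpr hTx.le))
        rw [hFdef]
        linarith
      have hp2 : x ^ 2 * |G x| ≤ A * (B * L) * Δ :=
        (mul_le_mul_of_nonneg_left (hGneg x hxneg) (sq_nonneg x)).trans hxtail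
      have hcomb : x ^ 2 * |F x - G x| ≤ 12 * A * B * (Δ * L) + A * (B * L) * Δ := by
        calc x ^ 2 * |F x - G x| ≤ x ^ 2 * (F x + |G x|) :=
              mul_le_mul_of_nonneg_left habs (sq_nonneg x)
        _ = x ^ 2 * F x + x ^ 2 * |G x| := by ring
        _ ≤ 12 * A * B * (Δ * L) + A * (B * L) * Δ := add_le_add (hp1.trans hTail) hp2
      linarith
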